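/- For any real α ∈ (0,1) and integers r > s ≥ 1, there exist constants 0 < γ₀ < γ₁ < 1 and n₂ > 0 such that for all integers n ≥ n₂, t ≤ γ₀·n and p ≥ γ₁·n with p ≤ n, we have α·N(n, p, r, s) > N(n, t, r, s), where N(n,t,r,s) = C(n−s+1, r−s+1) − C(n−s+1−t, r−s+1). -/

import Mathlib

/-- `N(n,t,r,s) = C(n−s+1, r−s+1) − C(n−s+1−t, r−s+1)`. -/
def NN (n t r s : ℕ) : ℕ :=
  (n - s + 1).choose (r - s + 1) - (n - s + 1 - t).choose (r - s + 1)

lemma choose_double (a k : ℕ) (hk : 1 ≤ k) : 2 * a.choose k ≤ (2 * a).choose k := by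
  have hsub : ({(0, k), (k, 0)} : Finset (ℕ × ℕ)) ⊆ Finset.HasAntidiagonal.antidiagonal k := by
    intro x hx
    simp only [Finset.mem_insert, Finset.mem_singleton] at hx
    rcases hx with h | h <;> subst h <;> simp [Finset.HasAntidiagonal.mem_antidiagonal]
  calc 2 * a.choose k = ∑ ij ∈ ({(0, k), (k, 0)} : Finset (ℕ × ℕ)),
        a.choose ij.1 * a.choose ij.2 := by
        rw [Finset.sum_insert (by simp; omega), Finset.sum_singleton]
        simp [two_mul]
    _ ≤ ∑ ij ∈ Finset.HasAntidiagonal.antidiagonal k, a.choose ij.1 * a.choose ij.2 :=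
        Finset.sum_le_sum_of_subset hsub
    _ = (a + a).choose k := (Nat.add_choose_eq a a k).symm
    _ = (2 * a).choose k := by rw [two_mul]

lemma choose_tele (m k : ℕ) (hk : 1 ≤ k) :
    ∀ t : ℕ, m.choose k - (m - t).choose k ≤ t * (m - 1).choose (k - 1) := by
  intro t
  induction t with
  | zero => simp
  | succ t ih =>
    have step : (m - t).choose k - (m - (t + 1)).choose k ≤ (m - 1).choose (k - 1) := by
      rcases Nat.eq_zero_or_pos (m - t) with h0 | h1
      · simp [h0, Nat.sub_eq_zero_of_le, show m - (t+1) = 0 by omega,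
          Nat.choose_eq_zero_of_lt (by omega : 0 < k)]
      · obtain ⟨a, ha⟩ := Nat.exists_eq_add_of_le h1
        have hma : m - (t + 1) = a := by omega
        rw [ha, hma]
        have hpascal : (1 + a).choose k = a.choose (k - 1) + a.choose k := by
          have : 1 + a = a + 1 := by omega
          rw [this]
          have : k = (k - 1) + 1 := by omega
          rw [this, Nat.choose_succ_succ]
          simp
        rw [hpascal]
        have : a.choose (k - 1) ≤ (m - 1).choose (k - 1) :=
          Nat.choose_le_choose _ (by omega)
        omega
    have tri : m.choose k - (m - (t + 1)).choose k ≤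
        (m.choose k - (m - t).choose k) + ((m - t).choose k - (m - (t + 1)).choose k) := by
      omega
    calc m.choose k - (m - (t + 1)).choose k
        ≤ (m.choose k - (m - t).choose k) + ((m - t).choose k - (m - (t+1)).choose k) := tri
      _ ≤ t * (m - 1).choose (k - 1) + (m - 1).choose (k - 1) := Nat.add_le_add ih step
      _ = (t + 1) * (m - 1).choose (k - 1) := by ring

lemma final_ineq (a x nR mR kR cR : ℝ) (ha : 0 < a) (hx : 0 < x) (hk : 2 ≤ kR)
    (hm : 0 < mR) (hn : 0 < nR) (h2 : nR ≤ 2 * mR) (hc : cR * kR = mR * x) :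
    a / (8 * kR) * nR * x < a * cR / 2 := by
  have hkpos : (0:ℝ) < kR := by linarith
  have hch : cR = mR * x / kR := by field_simp; linarith
  have e1 : a / (8 * kR) * nR * x = a * nR * x / (8 * kR) := by ring
  have e2 : a * (mR * x / kR) / 2 = a * mR * x / (2 * kR) := by
    field_simp
  rw [hch, e1, e2, div_lt_div_iff₀ (by positivity) (by positivity)]
  nlinarith [mul_pos (mul_pos (mul_pos ha hm) hx) hkpos,
    mul_nonneg (mul_nonneg (mul_nonneg ha.le hx.le) hkpos.le)
      (show (0:ℝ) ≤ 2 * mR - nR by linarith)]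

theorem stmt12 (α : ℝ) (hα0 : 0 < α) (hα1 : α < 1) (r s : ℕ) (hs : 1 ≤ s) (hrs : s < r) :
    ∃ γ₀ γ₁ : ℝ, ∃ n₂ : ℕ, 0 < γ₀ ∧ γ₀ < γ₁ ∧ γ₁ < 1 ∧ 0 < n₂ ∧
      ∀ n t p : ℕ, n₂ ≤ n → (t : ℝ) ≤ γ₀ * n → γ₁ * n ≤ (p : ℝ) → p ≤ n →
        α * (NN n p r s : ℝ) > (NN n t r s : ℝ) := by
  set k : ℕ := r - s + 1 with hkdef
  have hk2 : 2 ≤ k := by omega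
  have hkpos : (0:ℝ) < k := by positivity
  refine ⟨α / (8 * k), 3 / 4, 2 * (r + s) + 2, by positivity, ?_, by norm_num, by omega, ?_⟩
  · -- γ₀ < γ₁
    rw [div_lt_iff₀ (by positivity)]
    have : (2:ℝ) ≤ k := by exact_mod_cast hk2
    nlinarith
  · intro n t p hn ht hp1 hp2
    have hk2' : (2:ℝ) ≤ k := by exact_mod_cast hk2
    set m : ℕ := n - s + 1 with hmdef
    have hsn : s ≤ n := by omega
    have hrn : r ≤ n := by omega
    have hmR : (m:ℝ) = (n:ℝ) - s + 1 := by
      have : (m:ℕ) = n - s + 1 := rfl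
      push_cast [hmdef, hsn]
      ring
    have hmk : k ≤ m := by omega
    have hC1pos : 0 < (m - 1).choose (k - 1) := Nat.choose_pos (by omega)
    set C1 : ℕ := (m - 1).choose (k - 1) with hC1def
    -- Step A: m ≤ 2 * p
    have hnR : (2 * (r + s) + 2 : ℝ) ≤ n := by exact_mod_cast hn
    have hsR : (1:ℝ) ≤ s := by exact_mod_cast hs
    have hA : m ≤ 2 * p := by
      have : (m:ℝ) ≤ 2 * p := by rw [hmR]; nlinarith
      exact_mod_cast this
    -- Step B: 2 * (m-p).choose k ≤ m.choose k
    have hB : 2 * (m - p).choose k ≤ m.choose k := by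
      calc 2 * (m - p).choose k ≤ (2 * (m - p)).choose k := choose_double _ _ (by omega)
        _ ≤ m.choose k := Nat.choose_le_choose _ (by omega)
    -- NN n p as a real number
    have hNNp : (NN n p r s : ℝ) = (m.choose k : ℝ) - ((m - p).choose k : ℝ) := by
      have heq : NN n p r s = m.choose k - (m - p).choose k := rfl
      rw [heq, Nat.cast_sub (Nat.choose_le_choose _ (by omega))]
    -- NN n t bound
    have hNNt : (NN n t r s : ℕ) ≤ t * C1 := by
      have heq : NN n t r s = m.choose k - (m - t).choose k := rfl
      rw [heq]
      exact choose_tele m k (by omega) t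
    -- identity m * C1 = k * m.choose k
    have hid : m * C1 = m.choose k * k := by
      have := Nat.add_one_mul_choose_eq (m - 1) (k - 1)
      have h1 : m - 1 + 1 = m := by omega
      have h2 : k - 1 + 1 = k := by omega
      rw [h1, h2] at this
      exact this
    -- cast everything to ℝ
    have hidR : (m:ℝ) * C1 = (m.choose k : ℝ) * k := by exact_mod_cast hid
    have hBR : 2 * ((m - p).choose k : ℝ) ≤ (m.choose k : ℝ) := by exact_mod_cast hB
    have hNNtR : (NN n t r s : ℝ) ≤ (t:ℝ) * C1 := by exact_mod_cast hNNt
    have hC1R : (1:ℝ) ≤ C1 := by exact_mod_cast hC1pos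
    have hmhalf : (n:ℝ) / 2 ≤ m := by rw [hmR]; nlinarith
    -- chain
    have hchain1 : (NN n t r s : ℝ) ≤ α / (8 * k) * n * C1 := by
      have : (t:ℝ) * C1 ≤ α / (8 * k) * n * C1 := by
        apply mul_le_mul_of_nonneg_right ht (by positivity)
      linarith
    have hCmk : α * (NN n p r s : ℝ) ≥ α * (m.choose k : ℝ) / 2 := by
      rw [hNNp]
      have h2 : (m.choose k : ℝ) / 2 ≤ (m.choose k : ℝ) - ((m - p).choose k : ℝ) := by
        linarith
      have := mul_le_mul_of_nonneg_left h2 hα0.le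
      linarith
    have hfinal : α / (8 * k) * n * C1 < α * (m.choose k : ℝ) / 2 := by
      exact final_ineq α (C1:ℝ) (n:ℝ) (m:ℝ) (k:ℝ) ((m.choose k : ℕ):ℝ) hα0
        (by linarith) hk2' (by linarith) (by linarith) (by linarith)
        (by linarith [hidR])
    linarith
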